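/- For all u, v ∈ E: (1) u ∧ v = (u × v) ⌟ φ + Ψ_{uv} as 7×7 matrices; and (2) the matrix M = 2 (u ∧ v) + Ψ_{uv} satisfies Σ_{p,q} M(p,q) φ(p,q,k) = 0 for every k (so that (1/3)(u ∧ v - Ψ_{uv}) and (1/3)(2(u ∧ v) + Ψ_{uv}) are, respectively, the Λ²₇ and Λ²₁₄ components of u ∧ v). -/

import Mathlib

open scoped BigOperators RealInnerProductSpace Matrix

set_option maxHeartbeats 2000000
set_option maxRecDepth 20000

noncomputable section

/-- Euclidean 7-space. -/
abbrev E7 := EuclideanSpace ℝ (Fin 7)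

/-- Kronecker delta. -/
def kd (i j : Fin 7) : ℝ := if i = j then 1 else 0

/-- The totally antisymmetric 3-array with value 1 at `(a,b,c)` (for distinct `a,b,c`). -/
def tripleForm (a b c i j k : Fin 7) : ℝ :=
  kd i a * (kd j b * kd k c - kd j c * kd k b)
  - kd i b * (kd j a * kd k c - kd j c * kd k a)
  + kd i c * (kd j a * kd k b - kd j b * kd k a)

/-- The G₂ 3-form `φ` on `ℝ⁷` (indices 0-based: φ₁₂₃ = φ(0,1,2) etc.). -/
def phi7 (i j k : Fin 7) : ℝ :=
  tripleForm 0 1 2 i j k + tripleForm 0 3 4 i j k + tripleForm 1 3 5 i j k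
  + tripleForm 2 3 6 i j k + tripleForm 1 4 6 i j k
  - tripleForm 2 4 5 i j k - tripleForm 0 5 6 i j k

/-- The totally antisymmetric 4-array with value 1 at `(a,b,c,d)` (for distinct `a,b,c,d`). -/
def quadForm (a b c d i j k l : Fin 7) : ℝ :=
  Matrix.det !![kd i a, kd i b, kd i c, kd i d;
                kd j a, kd j b, kd j c, kd j d;
                kd k a, kd k b, kd k c, kd k d;
                kd l a, kd l b, kd l c, kd l d]

/-- The 4-form `ψ = ⋆φ` on `ℝ⁷` (indices 0-based). -/
def psi7 (i j k l : Fin 7) : ℝ :=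
  quadForm 3 4 5 6 i j k l + quadForm 0 2 3 5 i j k l + quadForm 1 2 5 6 i j k l
  + quadForm 0 2 4 6 i j k l + quadForm 0 1 4 5 i j k l
  - quadForm 1 2 3 4 i j k l - quadForm 0 1 3 6 i j k l

/-- The cross product on `ℝ⁷`: `(u × v)_k = Σ_{p,q} u_p v_q φ(p,q,k)`. -/
def crossE (u v : E7) : E7 := WithLp.toLp 2 (fun k => ∑ p, ∑ q, u p * v q * phi7 p q k)

/-- The matrix `u ⌟ φ`, with entries `(u ⌟ φ)(i,j) = Σ_p u_p φ(p,i,j)`. -/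
def contractPhi (u : E7) : Matrix (Fin 7) (Fin 7) ℝ :=
  Matrix.of fun i j => ∑ p, u p * phi7 p i j

/-- The matrix `u ∧ v`, with entries `u_i v_j - u_j v_i`. -/
def wedgeM (u v : E7) : Matrix (Fin 7) (Fin 7) ℝ :=
  Matrix.of fun i j => u i * v j - u j * v i

/-- The matrix `Ψ_{uv}`, with entries `Σ_{p,q} u_p v_q ψ(p,q,i,j)`. -/
def PsiM (u v : E7) : Matrix (Fin 7) (Fin 7) ℝ :=
  Matrix.of fun i j => ∑ p, ∑ q, u p * v q * psi7 p q i j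

/-- Evaluation of a matrix as a bilinear form: `X(u,v) = Σ_{i,j} u_i v_j X(i,j)`. -/
def Xform (X : Matrix (Fin 7) (Fin 7) ℝ) (u v : E7) : ℝ := ∑ i, ∑ j, u i * v j * X i j

/-- `X.mulVec v` as a map `E7 → E7`. -/
def mulVecE (X : Matrix (Fin 7) (Fin 7) ℝ) (v : E7) : E7 := WithLp.toLp 2 (fun i => ∑ j, X i j * v j)

/-- A skew-symmetric matrix is of type `Λ²₁₄` (i.e. lies in 𝔤₂). -/
def IsType14 (X : Matrix (Fin 7) (Fin 7) ℝ) : Prop :=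
  ∀ i j k : Fin 7, ∑ p, (X i p * phi7 p j k + X j p * phi7 i p k + X k p * phi7 i j p) = 0

/-- A G₂-adapted frame: an orthonormal basis `e₁,…,e₇` with
`e₃ = e₁ × e₂`, `e₅ = e₁ × e₄`, `e₆ = e₂ × e₄`, `e₇ = e₃ × e₄` (0-based indices). -/
def IsG2Frame (e : Fin 7 → E7) : Prop :=
  Orthonormal ℝ e ∧ e 2 = crossE (e 0) (e 1) ∧ e 4 = crossE (e 0) (e 3)
  ∧ e 5 = crossE (e 1) (e 3) ∧ e 6 = crossE (e 2) (e 3)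

/-- An associative 3-plane: a 3-dimensional subspace closed under the cross product. -/
def IsAssociative (P : Submodule ℝ E7) : Prop :=
  Module.finrank ℝ P = 3 ∧ ∀ u ∈ P, ∀ v ∈ P, crossE u v ∈ P


lemma quadForm_expand (a b c d i j k l : Fin 7) : quadForm a b c d i j k l =
    kd i a * (kd j b * (kd k c * kd l d - kd k d * kd l c) - kd j c * (kd k b * kd l d - kd k d * kd l b) + kd j d * (kd k b * kd l c - kd k c * kd l b))
  - kd i b * (kd j a * (kd k c * kd l d - kd k d * kd l c) - kd j c * (kd k a * kd l d - kd k d * kd l a) + kd j d * (kd k a * kd l c - kd k c * kd l a))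
  + kd i c * (kd j a * (kd k b * kd l d - kd k d * kd l b) - kd j b * (kd k a * kd l d - kd k d * kd l a) + kd j d * (kd k a * kd l b - kd k b * kd l a))
  - kd i d * (kd j a * (kd k b * kd l c - kd k c * kd l b) - kd j b * (kd k a * kd l c - kd k c * kd l a) + kd j c * (kd k a * kd l b - kd k b * kd l a)) := by
  simp [quadForm, Matrix.det_succ_row_zero, Fin.sum_univ_succ, Matrix.det_fin_three, Fin.succAbove]
  ring

lemma crossL_0 (u v : E7) : crossE u v 0 = (u 1 * v 2 - u 2 * v 1) + (u 3 * v 4 - u 4 * v 3) - (u 5 * v 6 - u 6 * v 5) := by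
  simp +decide [crossE, Fin.sum_univ_seven, phi7, tripleForm, kd]
  try ring

lemma crossL_1 (u v : E7) : crossE u v 1 = -(u 0 * v 2 - u 2 * v 0) + (u 3 * v 5 - u 5 * v 3) + (u 4 * v 6 - u 6 * v 4) := by
  simp +decide [crossE, Fin.sum_univ_seven, phi7, tripleForm, kd]
  try ring

lemma crossL_2 (u v : E7) : crossE u v 2 = (u 0 * v 1 - u 1 * v 0) + (u 3 * v 6 - u 6 * v 3) - (u 4 * v 5 - u 5 * v 4) := by
  simp +decide [crossE, Fin.sum_univ_seven, phi7, tripleForm, kd]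
  try ring

lemma crossL_3 (u v : E7) : crossE u v 3 = -(u 0 * v 4 - u 4 * v 0) - (u 1 * v 5 - u 5 * v 1) - (u 2 * v 6 - u 6 * v 2) := by
  simp +decide [crossE, Fin.sum_univ_seven, phi7, tripleForm, kd]
  try ring

lemma crossL_4 (u v : E7) : crossE u v 4 = (u 0 * v 3 - u 3 * v 0) - (u 1 * v 6 - u 6 * v 1) + (u 2 * v 5 - u 5 * v 2) := by
  simp +decide [crossE, Fin.sum_univ_seven, phi7, tripleForm, kd]
  try ring

lemma crossL_5 (u v : E7) : crossE u v 5 = (u 0 * v 6 - u 6 * v 0) + (u 1 * v 3 - u 3 * v 1) - (u 2 * v 4 - u 4 * v 2) := by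
  simp +decide [crossE, Fin.sum_univ_seven, phi7, tripleForm, kd]
  try ring

lemma crossL_6 (u v : E7) : crossE u v 6 = -(u 0 * v 5 - u 5 * v 0) + (u 1 * v 4 - u 4 * v 1) + (u 2 * v 3 - u 3 * v 2) := by
  simp +decide [crossE, Fin.sum_univ_seven, phi7, tripleForm, kd]
  try ring

lemma psiL_0_1 (u v : E7) : PsiM u v 0 1 = -(u 3 * v 6 - u 6 * v 3) + (u 4 * v 5 - u 5 * v 4) := by
  simp +decide [PsiM, Fin.sum_univ_seven, psi7, quadForm_expand, kd]
  try ring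

lemma psiL_0_2 (u v : E7) : PsiM u v 0 2 = (u 3 * v 5 - u 5 * v 3) + (u 4 * v 6 - u 6 * v 4) := by
  simp +decide [PsiM, Fin.sum_univ_seven, psi7, quadForm_expand, kd]
  try ring

lemma psiL_0_3 (u v : E7) : PsiM u v 0 3 = (u 1 * v 6 - u 6 * v 1) - (u 2 * v 5 - u 5 * v 2) := by
  simp +decide [PsiM, Fin.sum_univ_seven, psi7, quadForm_expand, kd]
  try ring

lemma psiL_0_4 (u v : E7) : PsiM u v 0 4 = -(u 1 * v 5 - u 5 * v 1) - (u 2 * v 6 - u 6 * v 2) := by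
  simp +decide [PsiM, Fin.sum_univ_seven, psi7, quadForm_expand, kd]
  try ring

lemma psiL_0_5 (u v : E7) : PsiM u v 0 5 = (u 1 * v 4 - u 4 * v 1) + (u 2 * v 3 - u 3 * v 2) := by
  simp +decide [PsiM, Fin.sum_univ_seven, psi7, quadForm_expand, kd]
  try ring

lemma psiL_0_6 (u v : E7) : PsiM u v 0 6 = -(u 1 * v 3 - u 3 * v 1) + (u 2 * v 4 - u 4 * v 2) := by
  simp +decide [PsiM, Fin.sum_univ_seven, psi7, quadForm_expand, kd]
  try ring

lemma psiL_1_2 (u v : E7) : PsiM u v 1 2 = -(u 3 * v 4 - u 4 * v 3) + (u 5 * v 6 - u 6 * v 5) := by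
  simp +decide [PsiM, Fin.sum_univ_seven, psi7, quadForm_expand, kd]
  try ring

lemma psiL_1_3 (u v : E7) : PsiM u v 1 3 = -(u 0 * v 6 - u 6 * v 0) + (u 2 * v 4 - u 4 * v 2) := by
  simp +decide [PsiM, Fin.sum_univ_seven, psi7, quadForm_expand, kd]
  try ring

lemma psiL_1_4 (u v : E7) : PsiM u v 1 4 = (u 0 * v 5 - u 5 * v 0) - (u 2 * v 3 - u 3 * v 2) := by
  simp +decide [PsiM, Fin.sum_univ_seven, psi7, quadForm_expand, kd]
  try ring

lemma psiL_1_5 (u v : E7) : PsiM u v 1 5 = -(u 0 * v 4 - u 4 * v 0) - (u 2 * v 6 - u 6 * v 2) := by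
  simp +decide [PsiM, Fin.sum_univ_seven, psi7, quadForm_expand, kd]
  try ring

lemma psiL_1_6 (u v : E7) : PsiM u v 1 6 = (u 0 * v 3 - u 3 * v 0) + (u 2 * v 5 - u 5 * v 2) := by
  simp +decide [PsiM, Fin.sum_univ_seven, psi7, quadForm_expand, kd]
  try ring

lemma psiL_2_3 (u v : E7) : PsiM u v 2 3 = (u 0 * v 5 - u 5 * v 0) - (u 1 * v 4 - u 4 * v 1) := by
  simp +decide [PsiM, Fin.sum_univ_seven, psi7, quadForm_expand, kd]
  try ring

lemma psiL_2_4 (u v : E7) : PsiM u v 2 4 = (u 0 * v 6 - u 6 * v 0) + (u 1 * v 3 - u 3 * v 1) := by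
  simp +decide [PsiM, Fin.sum_univ_seven, psi7, quadForm_expand, kd]
  try ring

lemma psiL_2_5 (u v : E7) : PsiM u v 2 5 = -(u 0 * v 3 - u 3 * v 0) + (u 1 * v 6 - u 6 * v 1) := by
  simp +decide [PsiM, Fin.sum_univ_seven, psi7, quadForm_expand, kd]
  try ring

lemma psiL_2_6 (u v : E7) : PsiM u v 2 6 = -(u 0 * v 4 - u 4 * v 0) - (u 1 * v 5 - u 5 * v 1) := by
  simp +decide [PsiM, Fin.sum_univ_seven, psi7, quadForm_expand, kd]
  try ring

lemma psiL_3_4 (u v : E7) : PsiM u v 3 4 = -(u 1 * v 2 - u 2 * v 1) + (u 5 * v 6 - u 6 * v 5) := by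
  simp +decide [PsiM, Fin.sum_univ_seven, psi7, quadForm_expand, kd]
  try ring

lemma psiL_3_5 (u v : E7) : PsiM u v 3 5 = (u 0 * v 2 - u 2 * v 0) - (u 4 * v 6 - u 6 * v 4) := by
  simp +decide [PsiM, Fin.sum_univ_seven, psi7, quadForm_expand, kd]
  try ring

lemma psiL_3_6 (u v : E7) : PsiM u v 3 6 = -(u 0 * v 1 - u 1 * v 0) + (u 4 * v 5 - u 5 * v 4) := by
  simp +decide [PsiM, Fin.sum_univ_seven, psi7, quadForm_expand, kd]
  try ring

lemma psiL_4_5 (u v : E7) : PsiM u v 4 5 = (u 0 * v 1 - u 1 * v 0) + (u 3 * v 6 - u 6 * v 3) := by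
  simp +decide [PsiM, Fin.sum_univ_seven, psi7, quadForm_expand, kd]
  try ring

lemma psiL_4_6 (u v : E7) : PsiM u v 4 6 = (u 0 * v 2 - u 2 * v 0) - (u 3 * v 5 - u 5 * v 3) := by
  simp +decide [PsiM, Fin.sum_univ_seven, psi7, quadForm_expand, kd]
  try ring

lemma psiL_5_6 (u v : E7) : PsiM u v 5 6 = (u 1 * v 2 - u 2 * v 1) + (u 3 * v 4 - u 4 * v 3) := by
  simp +decide [PsiM, Fin.sum_univ_seven, psi7, quadForm_expand, kd]
  try ring

lemma psi7_anti (p q i j : Fin 7) : psi7 p q j i = - psi7 p q i j := by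
  simp only [psi7, quadForm_expand]; ring

lemma PsiM_anti (u v : E7) (i j : Fin 7) : PsiM u v j i = - PsiM u v i j := by
  have h : ∀ p q : Fin 7, u p * v q * psi7 p q j i = -(u p * v q * psi7 p q i j) := by
    intro p q; rw [psi7_anti]; ring
  simp only [PsiM, Matrix.of_apply, h, Finset.sum_neg_distrib]

lemma psiL_0_0 (u v : E7) : PsiM u v 0 0 = 0 := by
  have h := PsiM_anti u v 0 0; linarith

lemma psiL_1_1 (u v : E7) : PsiM u v 1 1 = 0 := by
  have h := PsiM_anti u v 1 1; linarith

lemma psiL_2_2 (u v : E7) : PsiM u v 2 2 = 0 := by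
  have h := PsiM_anti u v 2 2; linarith

lemma psiL_3_3 (u v : E7) : PsiM u v 3 3 = 0 := by
  have h := PsiM_anti u v 3 3; linarith

lemma psiL_4_4 (u v : E7) : PsiM u v 4 4 = 0 := by
  have h := PsiM_anti u v 4 4; linarith

lemma psiL_5_5 (u v : E7) : PsiM u v 5 5 = 0 := by
  have h := PsiM_anti u v 5 5; linarith

lemma psiL_6_6 (u v : E7) : PsiM u v 6 6 = 0 := by
  have h := PsiM_anti u v 6 6; linarith

lemma psiL_1_0 (u v : E7) : PsiM u v 1 0 = -(-(u 3 * v 6 - u 6 * v 3) + (u 4 * v 5 - u 5 * v 4)) := by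
  rw [PsiM_anti, psiL_0_1]

lemma psiL_2_0 (u v : E7) : PsiM u v 2 0 = -((u 3 * v 5 - u 5 * v 3) + (u 4 * v 6 - u 6 * v 4)) := by
  rw [PsiM_anti, psiL_0_2]

lemma psiL_3_0 (u v : E7) : PsiM u v 3 0 = -((u 1 * v 6 - u 6 * v 1) - (u 2 * v 5 - u 5 * v 2)) := by
  rw [PsiM_anti, psiL_0_3]

lemma psiL_4_0 (u v : E7) : PsiM u v 4 0 = -(-(u 1 * v 5 - u 5 * v 1) - (u 2 * v 6 - u 6 * v 2)) := by
  rw [PsiM_anti, psiL_0_4]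

lemma psiL_5_0 (u v : E7) : PsiM u v 5 0 = -((u 1 * v 4 - u 4 * v 1) + (u 2 * v 3 - u 3 * v 2)) := by
  rw [PsiM_anti, psiL_0_5]

lemma psiL_6_0 (u v : E7) : PsiM u v 6 0 = -(-(u 1 * v 3 - u 3 * v 1) + (u 2 * v 4 - u 4 * v 2)) := by
  rw [PsiM_anti, psiL_0_6]

lemma psiL_2_1 (u v : E7) : PsiM u v 2 1 = -(-(u 3 * v 4 - u 4 * v 3) + (u 5 * v 6 - u 6 * v 5)) := by
  rw [PsiM_anti, psiL_1_2]

lemma psiL_3_1 (u v : E7) : PsiM u v 3 1 = -(-(u 0 * v 6 - u 6 * v 0) + (u 2 * v 4 - u 4 * v 2)) := by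
  rw [PsiM_anti, psiL_1_3]

lemma psiL_4_1 (u v : E7) : PsiM u v 4 1 = -((u 0 * v 5 - u 5 * v 0) - (u 2 * v 3 - u 3 * v 2)) := by
  rw [PsiM_anti, psiL_1_4]

lemma psiL_5_1 (u v : E7) : PsiM u v 5 1 = -(-(u 0 * v 4 - u 4 * v 0) - (u 2 * v 6 - u 6 * v 2)) := by
  rw [PsiM_anti, psiL_1_5]

lemma psiL_6_1 (u v : E7) : PsiM u v 6 1 = -((u 0 * v 3 - u 3 * v 0) + (u 2 * v 5 - u 5 * v 2)) := by
  rw [PsiM_anti, psiL_1_6]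

lemma psiL_3_2 (u v : E7) : PsiM u v 3 2 = -((u 0 * v 5 - u 5 * v 0) - (u 1 * v 4 - u 4 * v 1)) := by
  rw [PsiM_anti, psiL_2_3]

lemma psiL_4_2 (u v : E7) : PsiM u v 4 2 = -((u 0 * v 6 - u 6 * v 0) + (u 1 * v 3 - u 3 * v 1)) := by
  rw [PsiM_anti, psiL_2_4]

lemma psiL_5_2 (u v : E7) : PsiM u v 5 2 = -(-(u 0 * v 3 - u 3 * v 0) + (u 1 * v 6 - u 6 * v 1)) := by
  rw [PsiM_anti, psiL_2_5]

lemma psiL_6_2 (u v : E7) : PsiM u v 6 2 = -(-(u 0 * v 4 - u 4 * v 0) - (u 1 * v 5 - u 5 * v 1)) := by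
  rw [PsiM_anti, psiL_2_6]

lemma psiL_4_3 (u v : E7) : PsiM u v 4 3 = -(-(u 1 * v 2 - u 2 * v 1) + (u 5 * v 6 - u 6 * v 5)) := by
  rw [PsiM_anti, psiL_3_4]

lemma psiL_5_3 (u v : E7) : PsiM u v 5 3 = -((u 0 * v 2 - u 2 * v 0) - (u 4 * v 6 - u 6 * v 4)) := by
  rw [PsiM_anti, psiL_3_5]

lemma psiL_6_3 (u v : E7) : PsiM u v 6 3 = -(-(u 0 * v 1 - u 1 * v 0) + (u 4 * v 5 - u 5 * v 4)) := by
  rw [PsiM_anti, psiL_3_6]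

lemma psiL_5_4 (u v : E7) : PsiM u v 5 4 = -((u 0 * v 1 - u 1 * v 0) + (u 3 * v 6 - u 6 * v 3)) := by
  rw [PsiM_anti, psiL_4_5]

lemma psiL_6_4 (u v : E7) : PsiM u v 6 4 = -((u 0 * v 2 - u 2 * v 0) - (u 3 * v 5 - u 5 * v 3)) := by
  rw [PsiM_anti, psiL_4_6]

lemma psiL_6_5 (u v : E7) : PsiM u v 6 5 = -((u 1 * v 2 - u 2 * v 1) + (u 3 * v 4 - u 4 * v 3)) := by
  rw [PsiM_anti, psiL_5_6]

/-- `u ∧ v = (u × v) ⌟ φ + Ψ_{uv}`, and `2(u ∧ v) + Ψ_{uv}` has vanishing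
contraction with `φ` (so it is the `Λ²₁₄` part, up to the factor 1/3). -/
theorem stmt10 (u v : E7) :
    wedgeM u v = contractPhi (crossE u v) + PsiM u v ∧
    (∀ k : Fin 7, ∑ p, ∑ q, ((2 : ℝ) • wedgeM u v + PsiM u v) p q * phi7 p q k = 0) := by
  constructor
  · ext i j
    fin_cases i <;> fin_cases j <;>
      (simp +decide [wedgeM, contractPhi, Matrix.add_apply, Matrix.smul_apply, smul_eq_mul, Fin.sum_univ_seven, phi7, tripleForm, kd, crossL_0, crossL_1, crossL_2, crossL_3, crossL_4, crossL_5, crossL_6, psiL_0_0, psiL_0_1, psiL_0_2, psiL_0_3, psiL_0_4, psiL_0_5, psiL_0_6, psiL_1_0, psiL_1_1, psiL_1_2, psiL_1_3, psiL_1_4, psiL_1_5, psiL_1_6, psiL_2_0, psiL_2_1, psiL_2_2, psiL_2_3, psiL_2_4, psiL_2_5, psiL_2_6, psiL_3_0, psiL_3_1, psiL_3_2, psiL_3_3, psiL_3_4, psiL_3_5, psiL_3_6, psiL_4_0, psiL_4_1, psiL_4_2, psiL_4_3, psiL_4_4, psiL_4_5, psiL_4_6, psiL_5_0, psiL_5_1,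 psiL_5_2, psiL_5_3, psiL_5_4, psiL_5_5, psiL_5_6, psiL_6_0, psiL_6_1, psiL_6_2, psiL_6_3, psiL_6_4, psiL_6_5, psiL_6_6]; try ring)
  · intro k
    fin_cases k <;>
      (simp +decide [wedgeM, contractPhi, Matrix.add_apply, Matrix.smul_apply, smul_eq_mul, Fin.sum_univ_seven, phi7, tripleForm, kd, crossL_0, crossL_1, crossL_2, crossL_3, crossL_4, crossL_5, crossL_6, psiL_0_0, psiL_0_1, psiL_0_2, psiL_0_3, psiL_0_4, psiL_0_5, psiL_0_6, psiL_1_0, psiL_1_1, psiL_1_2, psiL_1_3, psiL_1_4, psiL_1_5, psiL_1_6, psiL_2_0, psiL_2_1, psiL_2_2, psiL_2_3, psiL_2_4, psiL_2_5, psiL_2_6, psiL_3_0, psiL_3_1, psiL_3_2, psiL_3_3, psiL_3_4, psiL_3_5, psiL_3_6, psiL_4_0, psiL_4_1, psiL_4_2, psiL_4_3, psiL_4_4, psiL_4_5, psiL_4_6, psiL_5_0, psiL_5_1, psiL_5_2, psiL_5_3, psiL_5_4, psiL_5_5, psiL_5_6, psiL_6_0, psiL_6_1, psiL_6_2, psiL_6_3,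 psiL_6_4, psiL_6_5, psiL_6_6]; try ring)

end
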